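/- Let a ∈ ℝ and let (x,y) : I → ℝ² be a differentiable solution on an open interval I containing 0 of the system x'(s) = 5x + 6x² + 4(1+a)xy + ay², y'(s) = x + 2y + 4xy + (2+3a)y². If f(x(0),y(0)) = 0, where f(x,y) = x² + x³ + x²y + 2axy² + 2axy³ + a²y⁴, then f(x(s),y(s)) = 0 for all s ∈ I; i.e., the quartic curve x² + x³ + x²y + 2axy² + 2axy³ + a²y⁴ = 0 consists of trajectories of the system. -/

import Mathlib

/-- If a solution of system (37) starts on the quartic curve
`f(x,y) = x² + x³ + x²y + 2axy² + 2axy³ + a²y⁴ = 0`, it remains on it: the quartic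
curve consists of trajectories of the system. -/
theorem stmt_16 (a : ℝ)
    (I : Set ℝ) (hI : IsOpen I) (hIconn : IsPreconnected I) (h0 : (0 : ℝ) ∈ I)
    (x y : ℝ → ℝ)
    (hx : ∀ s ∈ I, HasDerivAt x
      (5 * x s + 6 * (x s) ^ 2 + 4 * (1 + a) * x s * y s + a * (y s) ^ 2) s)
    (hy : ∀ s ∈ I, HasDerivAt y
      (x s + 2 * y s + 4 * x s * y s + (2 + 3 * a) * (y s) ^ 2) s)
    (hinit : (x 0) ^ 2 + (x 0) ^ 3 + (x 0) ^ 2 * y 0 + 2 * a * x 0 * (y 0) ^ 2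
      + 2 * a * x 0 * (y 0) ^ 3 + a ^ 2 * (y 0) ^ 4 = 0) :
    ∀ s ∈ I, (x s) ^ 2 + (x s) ^ 3 + (x s) ^ 2 * y s + 2 * a * x s * (y s) ^ 2
      + 2 * a * x s * (y s) ^ 3 + a ^ 2 * (y s) ^ 4 = 0 := by
  set F : ℝ → ℝ := fun t => (x t) ^ 2 + (x t) ^ 3 + (x t) ^ 2 * y t
    + 2 * a * x t * (y t) ^ 2 + 2 * a * x t * (y t) ^ 3 + a ^ 2 * (y t) ^ 4 with hFdef
  set K : ℝ → ℝ := fun t => 10 + 18 * x t + (10 + 12 * a) * y t with hKdef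
  have hconv : Convex ℝ I := hIconn.convex
  -- continuity of K on I
  have hKcont : ∀ s ∈ I, ContinuousAt K s := by
    intro s hs
    exact (continuousAt_const.add (continuousAt_const.mul (hx s hs).continuousAt)).add
      (continuousAt_const.mul (hy s hs).continuousAt)
  -- derivative of F
  have hF : ∀ s ∈ I, HasDerivAt F (K s * F s) s := by
    intro s hs
    have Hx := hx s hs
    have Hy := hy s hs
    have H := ((((((Hx.pow 2).add (Hx.pow 3)).add ((Hx.pow 2).mul Hy)).add
      (((Hx.const_mul (2 * a)).mul (Hy.pow 2)))).add
      (((Hx.const_mul (2 * a)).mul (Hy.pow 3)))).add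
      ((Hy.pow 4).const_mul (a ^ 2)))
    refine H.congr_deriv ?_
    simp only [hKdef, hFdef, Pi.pow_apply]
    push_cast
    ring
  -- antiderivative of K
  set C : ℝ → ℝ := fun t => ∫ u in (0:ℝ)..t, K u with hCdef
  have hC : ∀ s ∈ I, HasDerivAt C (K s) s := by
    intro s hs
    have hsub : Set.uIcc (0:ℝ) s ⊆ I := hconv.ordConnected.uIcc_subset h0 hs
    have hint : IntervalIntegrable K MeasureTheory.volume 0 s :=
      (continuousOn_of_forall_continuousAt (fun t ht => hKcont t (hsub ht))).intervalIntegrable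
    exact intervalIntegral.integral_hasDerivAt_right hint
      (ContinuousAt.stronglyMeasurableAtFilter hI hKcont s hs) (hKcont s hs)
  -- integrating factor
  set G : ℝ → ℝ := fun t => F t * Real.exp (-C t) with hGdef
  have hG : ∀ s ∈ I, HasDerivAt G 0 s := by
    intro s hs
    have H := (hF s hs).mul (((hC s hs).neg).exp)
    refine H.congr_deriv ?_
    ring
  have hconst : ∀ s ∈ I, G s = G 0 := by
    intro s hs
    have := Convex.norm_image_sub_le_of_norm_hasDerivWithin_le
      (f := G) (f' := fun _ => (0:ℝ)) (C := 0)
      (fun t ht => (hG t ht).hasDerivWithinAt) (fun t _ => by simp) hconv h0 hs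
    simp only [zero_mul] at this
    have h1 : ‖G s - G 0‖ = 0 := le_antisymm this (norm_nonneg _)
    have := norm_eq_zero.mp h1
    linarith [sub_eq_zero.mp this]
  intro s hs
  have hG0 : G 0 = 0 := by
    simp only [hGdef, hFdef]
    rw [hinit]
    ring
  have hGs := (hconst s hs).trans hG0
  have hexp : Real.exp (-C s) ≠ 0 := Real.exp_ne_zero _
  have : F s = 0 := by
    have := mul_eq_zero.mp hGs
    tauto
  simpa [hFdef] using this
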